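/- Let M be a finite Frobenius bimodule over a finite ring R and χ ∈ M̂. Then χ is a left generating character (i.e. R·χ = M̂) if and only if ker χ contains no nonzero left R-submodule of M. -/

import Mathlib

open MulOpposite

/-- `χ` is a (two-sided) generating character of the finite `(R,R)`-bimodule `M`:
the map `r ↦ r·χ` (where `(r·χ)(v) = χ(v·r)`, using the right action of `R` on `M`)
and the map `r ↦ χ·r` (where `(χ·r)(v) = χ(r·v)`) are bijections from `R` onto the
character group `M̂`, i.e. `M̂` is free of rank one as a left and as a right `R`-module
with basis `χ`. -/
def IsGenChar (R M : Type*) [Ring R] [AddCommGroup M]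
    [Module R M] [Module Rᵐᵒᵖ M] (χ : AddChar M ℂˣ) : Prop :=
  (Function.Injective fun r : R => fun v : M => χ (op r • v)) ∧
  (∀ ψ : AddChar M ℂˣ, ∃ r : R, ∀ v : M, ψ v = χ (op r • v)) ∧
  (Function.Injective fun r : R => fun v : M => χ (r • v)) ∧
  (∀ ψ : AddChar M ℂˣ, ∃ r : R, ∀ v : M, ψ v = χ (r • v))

/-- `M` is a Frobenius bimodule over `R`: `_R M ≅ _R R̂` and `M_R ≅ R̂_R`, equivalently
the character bimodule `M̂` is free of rank one on each side, with a common generator. -/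
def IsFrobeniusBimodule (R M : Type*) [Ring R] [AddCommGroup M]
    [Module R M] [Module Rᵐᵒᵖ M] : Prop :=
  ∃ χ : AddChar M ℂˣ, IsGenChar R M χ

/-- In a finite monoid, a left inverse is a right inverse. -/
private lemma aux_mul_eq_one_comm {R : Type*} [Monoid R] [Finite R] {a b : R}
    (h : a * b = 1) : b * a = 1 := by
  have hinj : Function.Injective (fun x : R => b * x) := by
    intro x y hxy
    have h2 : a * (b * x) = a * (b * y) := congrArg (a * ·) hxy
    simpa [← mul_assoc, h] using h2
  obtain ⟨c, hc⟩ := Finite.injective_iff_surjective.mp hinj 1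
  have hc2 : b * c = 1 := hc
  have hac : a = c := by
    calc a = a * b * c := by rw [mul_assoc, hc2, mul_one]
    _ = c := by rw [h, one_mul]
  rw [hac]; exact hc2

/-- Characters of a finite abelian group with values in `ℂˣ` separate points. -/
private lemma aux_char_sep {M : Type*} [AddCommGroup M] [Finite M] {v : M}
    (h : ∀ ψ : AddChar M ℂˣ, ψ v = 1) : v = 0 := by
  by_contra hv
  have : NeZero ((Monoid.exponent (Multiplicative M) : ℂ)) :=
    ⟨by exact_mod_cast Monoid.exponent_ne_zero_of_finite⟩
  obtain ⟨φ, hφ⟩ := CommGroup.exists_apply_ne_one_of_hasEnoughRootsOfUnity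
    (Multiplicative M) ℂ (a := Multiplicative.ofAdd v) (by simpa using hv)
  exact hφ (h (AddChar.toMonoidHomEquiv.symm φ))

/-- Let `M` be a finite Frobenius bimodule over a finite ring `R` and `χ ∈ M̂`.  Then `χ`
is a left generating character (`R·χ = M̂`) if and only if `ker χ` contains no nonzero
left `R`-submodule of `M`. -/
theorem left_generating_iff_ker_no_submodule
    (R M : Type*) [Ring R] [Fintype R] [AddCommGroup M] [Fintype M]
    [Module R M] [Module Rᵐᵒᵖ M] [SMulCommClass R Rᵐᵒᵖ M]
    (hM : IsFrobeniusBimodule R M) (χ : AddChar M ℂˣ) :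
    (∀ ψ : AddChar M ℂˣ, ∃ r : R, ∀ v : M, ψ v = χ (op r • v)) ↔
      (∀ N : Submodule R M, (∀ v ∈ N, χ v = 1) → N = ⊥) := by
  classical
  obtain ⟨θ, hinjR, hsurjR, hinjL, hsurjL⟩ := hM
  have hfaith : ∀ t : R, (∀ v : M, op t • v = 0) → t = 0 := by
    intro t ht
    have h0 : (fun v : M => θ (op t • v)) = (fun v : M => θ (op (0 : R) • v)) := by
      funext v
      rw [ht v, MulOpposite.op_zero, zero_smul]
    exact hinjR h0
  constructor
  · -- left generating ⇒ no nonzero submodule in the kernel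
    intro hsurj N hN
    -- χ = θ(op u • ·)
    obtain ⟨u, hu⟩ := hsurjR χ
    -- r * u = 1
    obtain ⟨r, hr⟩ := hsurj θ
    have hru : r * u = 1 := hinjR (funext fun v => by
      show θ (op (r * u) • v) = θ (op (1 : R) • v)
      rw [MulOpposite.op_mul, mul_smul, ← hu (op r • v), ← hr v,
        MulOpposite.op_one, one_smul])
    have hur : u * r = 1 := aux_mul_eq_one_comm hru
    -- the "Nakayama" map σ
    have hσ : ∀ s : R, ∃ c : R, ∀ v : M, θ (s • v) = θ (op c • v) := by
      intro s
      obtain ⟨c, hc⟩ := hsurjR (θ.compAddMonoidHom (DistribSMul.toAddMonoidHom M s))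
      exact ⟨c, fun v => hc v⟩
    choose σ hσ' using hσ
    have hσinj : Function.Injective σ := by
      intro s s' hss
      apply hinjL
      funext v
      show θ (s • v) = θ (s' • v)
      rw [hσ' s v, hss, ← hσ' s' v]
    have hσsurj : Function.Surjective σ := Finite.injective_iff_surjective.mp hσinj
    -- show N = ⊥
    rw [Submodule.eq_bot_iff]
    intro v hv
    apply aux_char_sep
    intro ψ
    obtain ⟨s, hs⟩ := hsurjL ψ
    obtain ⟨t, ht⟩ := hσsurj (r * σ s)
    have key : ∀ w : M, ψ w = χ (t • w) := by
      intro w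
      have h1 : χ (t • w) = θ (op (u * σ t) • w) := by
        calc χ (t • w) = θ (op u • (t • w)) := hu _
        _ = θ (t • (op u • w)) := by rw [← smul_comm t (op u) w]
        _ = θ (op (σ t) • (op u • w)) := hσ' t _
        _ = θ (op (u * σ t) • w) := by rw [← mul_smul, ← MulOpposite.op_mul]
      have h2 : u * σ t = σ s := by
        rw [ht, ← mul_assoc, hur, one_mul]
      rw [hs w, hσ' s w, h1, h2]
    rw [key v]
    exact hN (t • v) (N.smul_mem t hv)
  · -- no nonzero submodule in the kernel ⇒ left generating
    intro hker ψ
    -- R ≃ M̂ via θ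
    let E : R → AddChar M ℂˣ := fun r => θ.compAddMonoidHom (DistribSMul.toAddMonoidHom M (op r))
    have hEinj : Function.Injective E := by
      intro r s h
      apply hinjR
      funext v
      exact DFunLike.congr_fun h v
    have hEsurj : Function.Surjective E := by
      intro φ
      obtain ⟨r, hr⟩ := hsurjR φ
      exact ⟨r, DFunLike.ext _ _ fun v => (hr v).symm⟩
    let e : R ≃ AddChar M ℂˣ := Equiv.ofBijective E ⟨hEinj, hEsurj⟩
    let Φ : R → AddChar M ℂˣ := fun r => χ.compAddMonoidHom (DistribSMul.toAddMonoidHom M (op r))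
    have hΦinj : Function.Injective Φ := by
      intro r s h
      have h1 : ∀ v : M, χ (op (r - s) • v) = 1 := by
        intro v
        have h2 : χ (op r • v) = χ (op s • v) := DFunLike.congr_fun h v
        rw [MulOpposite.op_sub, sub_smul, AddChar.map_sub_eq_div, h2, div_self']
      let f : M →ₗ[R] M :=
        { toFun := fun v => op (r - s) • v
          map_add' := fun x y => smul_add _ x y
          map_smul' := fun c v => (smul_comm c (op (r - s)) v).symm }
      have hbot : LinearMap.range f = ⊥ := by
        apply hker
        rintro _ ⟨v, rfl⟩
        exact h1 v
      have hz : ∀ v : M, op (r - s) • v = 0 := by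
        intro v
        have : f v ∈ LinearMap.range f := LinearMap.mem_range_self f v
        rw [hbot] at this
        exact (Submodule.mem_bot R).mp this
      have : r - s = 0 := hfaith _ hz
      exact sub_eq_zero.mp this
    have hΦsurj : Function.Surjective Φ :=
      (Finite.injective_iff_surjective_of_equiv e).mp hΦinj
    obtain ⟨r, hr⟩ := hΦsurj ψ
    exact ⟨r, fun v => (DFunLike.congr_fun hr v).symm⟩
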